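/- Let f : ℝ^N → (-∞,∞] be a proper separable function, f(x) = Σ_{n=1}^N f_n(x_n) with each f_n proper. Then x* = (x*_1,…,x*_N) is an isolated local minimizer of f if and only if every x*_n is an isolated local minimizer of f_n. -/

import Mathlib

open Filter Topology

/-- A point `a` is a local minimizer of the `(-∞,∞]`-valued function `f`
(in particular `a ∈ dom f`). -/
def IsLocalMinimizer {α : Type*} [TopologicalSpace α] (f : α → EReal) (a : α) : Prop :=
  f a ≠ ⊤ ∧ ∀ᶠ x in nhds a, f a ≤ f x

/-- `a` is an isolated local minimizer of `f`: it is a local minimizer and it is the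
only local minimizer of `f` in some open neighborhood of `a`. -/
def IsIsolatedLocalMinimizer {α : Type*} [TopologicalSpace α] (f : α → EReal) (a : α) : Prop :=
  IsLocalMinimizer f a ∧
    ∃ U ∈ nhds a, ∀ y ∈ U, IsLocalMinimizer f y → y = a

/-- `f` is proper: it never takes the value `-∞` and is somewhere finite. -/
def ProperFun {α : Type*} (f : α → EReal) : Prop :=
  (∀ x, f x ≠ ⊥) ∧ ∃ x, f x ≠ ⊤

open Finset in
lemma ereal_sum_ne_bot {ι : Type*} {s : Finset ι} {g : ι → EReal} (h : ∀ i ∈ s, g i ≠ ⊥) :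
    ∑ i ∈ s, g i ≠ ⊥ := by
  induction s using Finset.cons_induction with
  | empty => simp
  | cons a s ha ih =>
    rw [Finset.sum_cons, ne_eq, EReal.add_eq_bot_iff]
    push_neg
    exact ⟨h a (mem_cons_self a s), ih fun i hi => h i (mem_cons_of_mem hi)⟩

open Finset in
lemma ereal_sum_ne_top {ι : Type*} {s : Finset ι} {g : ι → EReal} (h : ∀ i ∈ s, g i ≠ ⊤) :
    ∑ i ∈ s, g i ≠ ⊤ := by
  induction s using Finset.cons_induction with
  | empty => simp
  | cons a s ha ih =>
    rw [Finset.sum_cons]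
    exact (EReal.add_lt_top (h a (mem_cons_self a s))
      (ih fun i hi => h i (mem_cons_of_mem hi))).ne

section Core

open Finset

variable {N : ℕ} (fn : Fin N → ℝ → EReal)

lemma sum_update' (x : EuclideanSpace ℝ (Fin N)) (n : Fin N) (t : ℝ) :
    ∑ m, fn m (Function.update x n t m) = fn n t + ∑ m ∈ univ.erase n, fn m (x m) := by
  rw [← Finset.add_sum_erase _ _ (mem_univ n)]
  congr 1
  · simp
  · exact Finset.sum_congr rfl fun m hm => by rw [Function.update_apply, if_neg (mem_erase.1 hm).1]

lemma continuous_update' (x : EuclideanSpace ℝ (Fin N)) (n : Fin N) :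
    Continuous fun t : ℝ => (WithLp.toLp 2 (Function.update x n t) : EuclideanSpace ℝ (Fin N)) := by
  apply (PiLp.continuous_toLp 2 _).comp
  apply continuous_pi
  intro i
  simp only [Function.update_apply]
  by_cases h : i = n <;> simp [h]
  exacts [continuous_id, continuous_const]

lemma localMin_iff (hproper : ∀ n, ProperFun (fn n)) (y : EuclideanSpace ℝ (Fin N)) :
    IsLocalMinimizer (fun z : EuclideanSpace ℝ (Fin N) => ∑ n, fn n (z n)) y ↔
      ∀ n, IsLocalMinimizer (fn n) (y n) := by
  constructor
  · rintro ⟨hne, hev⟩ n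
    dsimp only at hne hev
    -- each coordinate value is finite
    have hfin : ∀ m, fn m (y m) ≠ ⊤ := by
      intro m hm
      apply hne
      have h1 : ∑ k, fn k (y k) = fn m (y m) + ∑ k ∈ univ.erase m, fn k (y k) :=
        (Finset.add_sum_erase _ _ (mem_univ m)).symm
      rw [h1, hm, add_comm]
      exact EReal.add_top_of_ne_bot (ereal_sum_ne_bot fun k _ => (hproper k).1 (y k))
    refine ⟨hfin n, ?_⟩
    have hSbot : (∑ m ∈ univ.erase n, fn m (y m)) ≠ ⊥ :=
      ereal_sum_ne_bot fun k _ => (hproper k).1 (y k)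
    have hStop : (∑ m ∈ univ.erase n, fn m (y m)) ≠ ⊤ :=
      ereal_sum_ne_top fun k _ => hfin k
    set s : ℝ := (∑ m ∈ univ.erase n, fn m (y m)).toReal with hsdef
    have hs : (∑ m ∈ univ.erase n, fn m (y m)) = (s : EReal) :=
      (EReal.coe_toReal hStop hSbot).symm
    have hcont : Filter.Tendsto (fun t : ℝ => (WithLp.toLp 2 (Function.update y n t) : EuclideanSpace ℝ (Fin N)))
        (nhds (y n)) (nhds y) := by
      have := (continuous_update' y n).tendsto (y n)
      rwa [Function.update_eq_self] at this
    filter_upwards [hcont.eventually hev] with t ht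
    have h2 : ∑ m, fn m (Function.update y n t m) = fn n t + (s : EReal) := by
      rw [sum_update', hs]
    have h3 : ∑ m, fn m (y m) = fn n (y n) + (s : EReal) := by
      have h4 := sum_update' fn y n (y n)
      rw [Function.update_eq_self] at h4
      rw [h4, hs]
    rw [h2, h3] at ht
    exact (EReal.addLECancellable_coe s).add_le_add_iff_right.1 ht
  · intro h
    refine ⟨ereal_sum_ne_top fun k _ => (h k).1, ?_⟩
    have hev : ∀ n, ∀ᶠ z : EuclideanSpace ℝ (Fin N) in nhds y, fn n (y n) ≤ fn n (z n) :=
      fun n => ((PiLp.continuous_apply 2 _ n).tendsto y).eventually (h n).2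
    filter_upwards [eventually_all.2 hev] with z hz
    exact Finset.sum_le_sum fun i _ => hz i

end Core

/-- A separable proper function has an isolated local minimizer at `x` iff each coordinate
function has an isolated local minimizer at the corresponding coordinate. -/
theorem separable_isolatedLocalMin_iff {N : ℕ} (fn : Fin N → ℝ → EReal)
    (hproper : ∀ n, ProperFun (fn n))
    (x : EuclideanSpace ℝ (Fin N)) :
    IsIsolatedLocalMinimizer (fun y : EuclideanSpace ℝ (Fin N) => ∑ n, fn n (y n)) x ↔
      ∀ n, IsIsolatedLocalMinimizer (fn n) (x n) := by
  constructor
  · rintro ⟨hmin, U, hU, huniq⟩ n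
    have hcoord := (localMin_iff fn hproper x).1 hmin
    refine ⟨hcoord n, ?_⟩
    have hcont : Filter.Tendsto (fun t : ℝ => (WithLp.toLp 2 (Function.update x n t) : EuclideanSpace ℝ (Fin N)))
        (nhds (x n)) (nhds x) := by
      have := (continuous_update' x n).tendsto (x n)
      rwa [Function.update_eq_self] at this
    refine ⟨(fun t : ℝ => (WithLp.toLp 2 (Function.update x n t) : EuclideanSpace ℝ (Fin N))) ⁻¹' U,
      hcont hU, fun t htV hmt => ?_⟩
    have hall : ∀ m, IsLocalMinimizer (fn m)
        ((WithLp.toLp 2 (Function.update x n t) : EuclideanSpace ℝ (Fin N)) m) := by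
      intro m
      by_cases hmn : m = n
      · subst hmn; rwa [WithLp.ofLp_toLp, Function.update_self]
      · rw [WithLp.ofLp_toLp, Function.update_apply, if_neg hmn]; exact hcoord m
    have hx := huniq _ htV ((localMin_iff fn hproper _).2 hall)
    have := congrFun (congrArg WithLp.ofLp hx) n
    simpa using this
  · intro h
    refine ⟨(localMin_iff fn hproper x).2 fun n => (h n).1, ?_⟩
    choose U hU hUn using fun n => (h n).2
    refine ⟨WithLp.ofLp ⁻¹' Set.pi Set.univ U, (PiLp.continuous_ofLp 2 _).continuousAt.preimage_mem_nhds (set_pi_mem_nhds Set.finite_univ fun n _ => hU n),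
      fun y hy hminy => ?_⟩
    have hc := (localMin_iff fn hproper y).1 hminy
    apply WithLp.ofLp_injective
    funext m
    exact hUn m (y m) (hy m (Set.mem_univ m)) (hc m)
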